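/- (Lemma 6.5, second part) Suppose G carries an orientation such that K(v) > 0 for every v ∈ V (hence K_comb(v) > 0 for all v). Then (liminf_{v ∈ V} K_comb(v))/ℓ*_ess(G) ≤ α_ess(G) ≤ 2/ℓ*_ess(G), as inequalities in [0,∞] with the convention 1/0 = +∞. -/

import Mathlib

open scoped Classical ENNReal
open MeasureTheory

noncomputable section

/-- A real function on `[0, L]` which is continuous and piecewise continuously
differentiable: there is a finite partition `0 = x 0 < x 1 < ... < x n = L` such that
on each closed piece the function has a continuous derivative. -/
def PiecewiseC1 (f : ℝ → ℝ) (L : ℝ) : Prop :=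
  ContinuousOn f (Set.Icc 0 L) ∧
  ∃ (n : ℕ) (x : Fin (n + 1) → ℝ), x 0 = 0 ∧ x (Fin.last n) = L ∧ StrictMono x ∧
    ∀ i : Fin n, ∃ g : ℝ → ℝ,
      ContinuousOn g (Set.Icc (x i.castSucc) (x i.succ)) ∧
      ∀ t ∈ Set.Icc (x i.castSucc) (x i.succ),
        HasDerivWithinAt f (g t) (Set.Icc (x i.castSucc) (x i.succ)) t

/-- The underlying (unoriented) simple graph of a set of edges `E` with endpoint
map `ends : E → V × V`. -/
def graphOf {V E : Type} (ends : E → V × V) : SimpleGraph V :=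
  SimpleGraph.fromRel fun u v => ∃ e, ends e = (u, v)

/-- A metric graph: a connected, locally finite, simple combinatorial graph with
countably infinite vertex and edge sets, each edge having a finite positive length.
Each edge carries an (auxiliary) orientation given by `ends`. -/
structure MetricGraph : Type 1 where
  V : Type
  E : Type
  countV : Countable V
  infV : Infinite V
  countE : Countable E
  infE : Infinite E
  ends : E → V × V
  len : E → ℝ
  len_pos : ∀ e, 0 < len e
  no_loops : ∀ e, (ends e).1 ≠ (ends e).2
  no_multi : Function.Injective fun e => Sym2.mk (ends e)
  locfin : ∀ v, {e | (ends e).1 = v ∨ (ends e).2 = v}.Finite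
  conn : (graphOf ends).Connected

namespace MetricGraph

/-- The underlying simple graph. -/
def graph (Γ : MetricGraph) : SimpleGraph Γ.V := graphOf Γ.ends

/-- The star of a vertex: the set of edges incident to it. -/
def star (Γ : MetricGraph) (v : Γ.V) : Set Γ.E :=
  {e | (Γ.ends e).1 = v ∨ (Γ.ends e).2 = v}

/-- Combinatorial degree of a vertex. -/
def degree (Γ : MetricGraph) (v : Γ.V) : ℕ := (Γ.locfin v).toFinset.card

/-- The vertices of a (finite) subgraph given by a finite set of edges. -/
def vertsOf (Γ : MetricGraph) (F : Finset Γ.E) : Finset Γ.V :=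
  F.image (fun e => (Γ.ends e).1) ∪ F.image fun e => (Γ.ends e).2

/-- The degree of a vertex inside the subgraph given by the edge set `F`. -/
def degIn (Γ : MetricGraph) (F : Finset Γ.E) (v : Γ.V) : ℕ :=
  (F.filter fun e => (Γ.ends e).1 = v ∨ (Γ.ends e).2 = v).card

/-- Connectedness of the subgraph spanned by the edge set `F`. -/
def SubConn (Γ : MetricGraph) (F : Finset Γ.E) : Prop :=
  ((SimpleGraph.fromRel fun u v => ∃ e ∈ F, Γ.ends e = (u, v)).induce
    (↑(Γ.vertsOf F) : Set Γ.V)).Connected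

/-- A finite connected subgraph (with at least one edge), given by its edge set. -/
def IsFinSubgraph (Γ : MetricGraph) (F : Finset Γ.E) : Prop :=
  F.Nonempty ∧ Γ.SubConn F

/-- The boundary of a finite subgraph with respect to `Γ`: the vertices whose degree
in the subgraph is strictly smaller than the degree in `Γ`. -/
def bdry (Γ : MetricGraph) (F : Finset Γ.E) : Finset Γ.V :=
  (Γ.vertsOf F).filter fun v => Γ.degIn F v < Γ.degree v

/-- `deg (∂_G G̃)`. -/
def degBdry (Γ : MetricGraph) (F : Finset Γ.E) : ℝ :=
  ∑ v ∈ Γ.bdry F, (Γ.degIn F v : ℝ)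

/-- The total length (Lebesgue measure) of a finite subgraph. -/
def mes (Γ : MetricGraph) (F : Finset Γ.E) : ℝ := ∑ e ∈ F, Γ.len e

/-- The isoperimetric (Cheeger) constant of a metric graph. -/
def alpha (Γ : MetricGraph) : ℝ :=
  sInf {r : ℝ | ∃ F : Finset Γ.E, Γ.IsFinSubgraph F ∧ r = Γ.degBdry F / Γ.mes F}

/-- The isoperimetric constant at infinity, as an element of `[0,∞]`. -/
def alphaEssEnn (Γ : MetricGraph) : ℝ≥0∞ :=
  ⨆ W : Finset Γ.E, ⨅ (F : Finset Γ.E) (_ : Γ.IsFinSubgraph F ∧ Disjoint F W),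
    ENNReal.ofReal (Γ.degBdry F / Γ.mes F)

/-- The vertex weight `m(v) = Σ_{e ∈ E_v} |e|`. -/
def mweight (Γ : MetricGraph) (v : Γ.V) : ℝ :=
  ∑ e ∈ (Γ.locfin v).toFinset, Γ.len e

/-- The set of boundary edges of a vertex set: edges with exactly one endpoint in `X`. -/
def Eb (Γ : MetricGraph) (X : Set Γ.V) : Set Γ.E :=
  {e | Xor' ((Γ.ends e).1 ∈ X) ((Γ.ends e).2 ∈ X)}

/-- The discrete isoperimetric constant of a vertex set `U`. -/
def alphaD (Γ : MetricGraph) (U : Set Γ.V) : ℝ :=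
  sInf {r : ℝ | ∃ X : Finset Γ.V, ↑X ⊆ U ∧ X.Nonempty ∧
    r = ((Γ.Eb ↑X).ncard : ℝ) / ∑ v ∈ X, Γ.mweight v}

/-- The discrete isoperimetric constant at infinity, as an element of `[0,∞]`. -/
def alphaDEssEnn (Γ : MetricGraph) : ℝ≥0∞ :=
  ⨆ X : Finset Γ.V, ENNReal.ofReal (Γ.alphaD (↑X : Set Γ.V)ᶜ)

/-- The combinatorial isoperimetric constant. -/
def alphaComb (Γ : MetricGraph) : ℝ :=
  sInf {r : ℝ | ∃ X : Finset Γ.V, X.Nonempty ∧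
    r = ((Γ.Eb ↑X).ncard : ℝ) / ∑ v ∈ X, (Γ.degree v : ℝ)}

/-- `ℓ*(G) = sup of edge lengths`. -/
def ellSup (Γ : MetricGraph) : ℝ := sSup (Set.range Γ.len)

/-- `ℓ_*(G) = inf of edge lengths`. -/
def ellInf (Γ : MetricGraph) : ℝ := sInf (Set.range Γ.len)

/-- `ℓ*(G)` as an element of `[0,∞]`. -/
def ellSupEnn (Γ : MetricGraph) : ℝ≥0∞ := ⨆ e : Γ.E, ENNReal.ofReal (Γ.len e)

/-- `ℓ*_ess(G) = inf_F sup_{e ∉ F} |e|` as an element of `[0,∞]`. -/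
def ellSupEssEnn (Γ : MetricGraph) : ℝ≥0∞ :=
  ⨅ W : Finset Γ.E, ⨆ e : {e : Γ.E // e ∉ W}, ENNReal.ofReal (Γ.len (e : Γ.E))

/-- Outgoing edges at a vertex (for the fixed orientation). -/
def plusE (Γ : MetricGraph) (v : Γ.V) : Set Γ.E := {e | (Γ.ends e).1 = v}

/-- Incoming edges at a vertex (for the fixed orientation). -/
def minusE (Γ : MetricGraph) (v : Γ.V) : Set Γ.E := {e | (Γ.ends e).2 = v}

/-- The curvature `K(v) = ((#E_v⁺ − #E_v⁻)/#E_v⁺) · inf_{e ∈ E_v⁺} 1/|e|`. -/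
def Kcurv (Γ : MetricGraph) (v : Γ.V) : ℝ :=
  (((Γ.plusE v).ncard : ℝ) - ((Γ.minusE v).ncard : ℝ)) / ((Γ.plusE v).ncard : ℝ) *
    sInf ((fun e => 1 / Γ.len e) '' Γ.plusE v)

/-- The combinatorial curvature `K_comb(v) = 1 − #E_v⁻/#E_v⁺`. -/
def Kcomb (Γ : MetricGraph) (v : Γ.V) : ℝ :=
  1 - ((Γ.minusE v).ncard : ℝ) / ((Γ.plusE v).ncard : ℝ)

/-- `liminf_{v ∈ V} K(v) = sup over finite W of inf_{v ∉ W} K(v)`, in `[0,∞]`. -/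
def KcurvEssEnn (Γ : MetricGraph) : ℝ≥0∞ :=
  ⨆ W : Finset Γ.V, ⨅ v : {v : Γ.V // v ∉ W}, ENNReal.ofReal (Γ.Kcurv (v : Γ.V))

/-- `liminf_{v ∈ V} K_comb(v) = sup over finite W of inf_{v ∉ W} K_comb(v)`. -/
def KcombLiminf (Γ : MetricGraph) : ℝ :=
  sSup (Set.range fun W : Finset Γ.V => sInf (Γ.Kcomb '' (↑W : Set Γ.V)ᶜ))

/-- The value of an edgewise function at an endpoint of an edge. -/
def endVal (Γ : MetricGraph) (f : Γ.E → ℝ → ℝ) (e : Γ.E) (v : Γ.V) : ℝ :=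
  if (Γ.ends e).1 = v then f e 0 else f e (Γ.len e)

/-- A test function on the metric graph `Γ`: a family of continuous, piecewise `C¹`
functions on the edges, matching at the vertices, vanishing on all but finitely
many edges. -/
structure TestFun (Γ : MetricGraph) where
  f : Γ.E → ℝ → ℝ
  piecewise : ∀ e, PiecewiseC1 (f e) (Γ.len e)
  vertexCont : ∀ e e' : Γ.E, ∀ v : Γ.V, e ∈ Γ.star v → e' ∈ Γ.star v →
    Γ.endVal f e v = Γ.endVal f e' v
  finSupp : {e : Γ.E | ∃ x ∈ Set.Icc 0 (Γ.len e), f e x ≠ 0}.Finite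

/-- `‖f‖² = Σ_e ∫₀^{|e|} f_e(x)² dx`. -/
def TestFun.normSq {Γ : MetricGraph} (φ : TestFun Γ) : ℝ :=
  ∑ᶠ e : Γ.E, ∫ x in (0:ℝ)..Γ.len e, (φ.f e x) ^ 2

/-- `‖f′‖² = Σ_e ∫₀^{|e|} f_e′(x)² dx`. -/
def TestFun.energySq {Γ : MetricGraph} (φ : TestFun Γ) : ℝ :=
  ∑ᶠ e : Γ.E, ∫ x in (0:ℝ)..Γ.len e, (deriv (φ.f e) x) ^ 2

/-- A test function is nonzero if it does not vanish identically on the graph. -/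
def TestFun.Nonzero {Γ : MetricGraph} (φ : TestFun Γ) : Prop :=
  ∃ e : Γ.E, ∃ x ∈ Set.Icc 0 (Γ.len e), φ.f e x ≠ 0

/-- The bottom of the spectrum of the Kirchhoff Laplacian, via the variational
(Rayleigh quotient) characterization. -/
def lambda0 (Γ : MetricGraph) : ℝ :=
  sInf {r : ℝ | ∃ φ : TestFun Γ, φ.Nonzero ∧ r = φ.energySq / φ.normSq}

end MetricGraph

/-- A weighted graph `(V, m, b)`: a connected, locally finite, simple combinatorial
graph with countably infinite vertex and edge sets, an edge weight `b` and a vertex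
weight `m`. -/
structure WeightedGraph : Type 1 where
  V : Type
  E : Type
  countV : Countable V
  infV : Infinite V
  countE : Countable E
  infE : Infinite E
  ends : E → V × V
  no_loops : ∀ e, (ends e).1 ≠ (ends e).2
  no_multi : Function.Injective fun e => Sym2.mk (ends e)
  locfin : ∀ v, {e | (ends e).1 = v ∨ (ends e).2 = v}.Finite
  conn : (graphOf ends).Connected
  b : E → ℝ
  b_pos : ∀ e, 0 < b e
  m : V → ℝ
  m_pos : ∀ v, 0 < m v

namespace WeightedGraph

/-- An edge weight `d` is intrinsic if `Σ_{e ∈ E_v} d(e)² b(e) ≤ m(v)` for all `v`. -/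
def Intrinsic (Γ : WeightedGraph) (d : Γ.E → ℝ) : Prop :=
  ∀ v, ∑ e ∈ (Γ.locfin v).toFinset, d e ^ 2 * Γ.b e ≤ Γ.m v

/-- The boundary edges of a vertex set: edges with exactly one endpoint in `X`. -/
def Eb (Γ : WeightedGraph) (X : Set Γ.V) : Set Γ.E :=
  {e | Xor' ((Γ.ends e).1 ∈ X) ((Γ.ends e).2 ∈ X)}

/-- The discrete isoperimetric constant `α_d(U)` with respect to the weight `d`. -/
def alphaD (Γ : WeightedGraph) (d : Γ.E → ℝ) (U : Set Γ.V) : ℝ :=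
  sInf {r : ℝ | ∃ X : Finset Γ.V, ↑X ⊆ U ∧ X.Nonempty ∧
    r = (∑ᶠ e ∈ Γ.Eb ↑X, d e * Γ.b e) / ∑ v ∈ X, Γ.m v}

/-- The discrete isoperimetric constant at infinity, in `[0,∞]`. -/
def alphaDEssEnn (Γ : WeightedGraph) (d : Γ.E → ℝ) : ℝ≥0∞ :=
  ⨆ X : Finset Γ.V, ENNReal.ofReal (Γ.alphaD d (↑X : Set Γ.V)ᶜ)

/-- The energy form `Q(u) = Σ_e b(e) (u(e_i) − u(e_0))²`. -/
def Q (Γ : WeightedGraph) (u : Γ.V → ℝ) : ℝ :=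
  ∑ᶠ e : Γ.E, Γ.b e * (u (Γ.ends e).2 - u (Γ.ends e).1) ^ 2

/-- The squared norm `Σ_v m(v) u(v)²`. -/
def normSqD (Γ : WeightedGraph) (u : Γ.V → ℝ) : ℝ :=
  ∑ᶠ v : Γ.V, Γ.m v * u v ^ 2

/-- The bottom of the spectrum of the Friedrichs extension of the weighted Laplacian,
via the variational characterization over finitely supported functions. -/
def lambda0 (Γ : WeightedGraph) : ℝ :=
  sInf {r : ℝ | ∃ u : Γ.V → ℝ, (Function.support u).Finite ∧ u ≠ 0 ∧
    r = Γ.Q u / Γ.normSqD u}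

/-- The bottom of the essential spectrum of the Friedrichs extension, via Glazman's
decomposition principle, in `[0,∞]`. -/
def lambda0EssEnn (Γ : WeightedGraph) : ℝ≥0∞ :=
  ⨆ X : Finset Γ.V, ⨅ (u : Γ.V → ℝ)
    (_ : (Function.support u).Finite ∧ u ≠ 0 ∧ ∀ v ∈ X, u v = 0),
      ENNReal.ofReal (Γ.Q u / Γ.normSqD u)

end WeightedGraph

end

namespace MetricGraph

variable (Γ : MetricGraph)

lemma plusE_finite (v : Γ.V) : (Γ.plusE v).Finite :=
  (Γ.locfin v).subset fun _ he => Or.inl he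

lemma Kcomb_le_one (v : Γ.V) : Γ.Kcomb v ≤ 1 := by
  have h0 : (0:ℝ) ≤ ((Γ.minusE v).ncard : ℝ) / ((Γ.plusE v).ncard : ℝ) := by positivity
  have : Γ.Kcomb v = 1 - ((Γ.minusE v).ncard : ℝ) / ((Γ.plusE v).ncard : ℝ) := rfl
  rw [this]; linarith

lemma degBdry_nonneg (F : Finset Γ.E) : 0 ≤ Γ.degBdry F :=
  Finset.sum_nonneg fun v _ => by positivity

/-- The key combinatorial estimate: if all vertices of the subgraph `F` have
combinatorial curvature at least `c ≤ 2`, then `c · #F ≤ deg ∂F`. -/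
lemma key_estimate (h : ∀ v : Γ.V, (Γ.plusE v).Nonempty) (c : ℝ) (hc : c ≤ 2)
    (F : Finset Γ.E) (hKc : ∀ v ∈ Γ.vertsOf F, c ≤ Γ.Kcomb v) :
    c * F.card ≤ Γ.degBdry F := by
  classical
  have hmem1 : ∀ e ∈ F, (Γ.ends e).1 ∈ Γ.vertsOf F := fun e he =>
    Finset.mem_union_left _ (Finset.mem_image_of_mem _ he)
  have hmem2 : ∀ e ∈ F, (Γ.ends e).2 ∈ Γ.vertsOf F := fun e he =>
    Finset.mem_union_right _ (Finset.mem_image_of_mem _ he)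
  set p : Γ.V → ℕ := fun v => (F.filter fun e => (Γ.ends e).1 = v).card with hp
  set m : Γ.V → ℕ := fun v => (F.filter fun e => (Γ.ends e).2 = v).card with hm
  have hsump : ∑ v ∈ Γ.vertsOf F, p v = F.card :=
    (Finset.card_eq_sum_card_fiberwise hmem1).symm
  have hsumm : ∑ v ∈ Γ.vertsOf F, m v = F.card :=
    (Finset.card_eq_sum_card_fiberwise hmem2).symm
  have hpm : ∀ v, Γ.degIn F v = p v + m v := by
    intro v
    have hdisj : Disjoint (F.filter fun e => (Γ.ends e).1 = v)
        (F.filter fun e => (Γ.ends e).2 = v) := by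
      refine Finset.disjoint_left.mpr fun e he1 he2 => ?_
      have h1 := (Finset.mem_filter.mp he1).2
      have h2 := (Finset.mem_filter.mp he2).2
      exact Γ.no_loops e (h1.trans h2.symm)
    rw [degIn, Finset.filter_or, Finset.card_union_of_disjoint hdisj]
  have hkey : ∀ v ∈ Γ.vertsOf F, c * p v ≤ ((p v : ℝ) - m v) +
      (if Γ.degIn F v < Γ.degree v then (Γ.degIn F v : ℝ) else 0) := by
    intro v hv
    by_cases hb : Γ.degIn F v < Γ.degree v
    · simp only [hb, if_true]
      have hdeg := hpm v
      have h2 : c * p v ≤ 2 * p v :=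
        mul_le_mul_of_nonneg_right hc (by positivity)
      have : (Γ.degIn F v : ℝ) = (p v : ℝ) + m v := by rw [hdeg]; push_cast; ring
      rw [this]; linarith
    · simp only [hb, if_false, add_zero]
      -- interior vertex: its full star lies in F
      have hle : Γ.degree v ≤ Γ.degIn F v := not_lt.mp hb
      have hsub : (F.filter fun e => (Γ.ends e).1 = v ∨ (Γ.ends e).2 = v)
          ⊆ (Γ.locfin v).toFinset := fun e he =>
        (Γ.locfin v).mem_toFinset.mpr (Finset.mem_filter.mp he).2
      have heq : (F.filter fun e => (Γ.ends e).1 = v ∨ (Γ.ends e).2 = v)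
          = (Γ.locfin v).toFinset :=
        Finset.eq_of_subset_of_card_le hsub hle
      have hstar : ∀ e : Γ.E, ((Γ.ends e).1 = v ∨ (Γ.ends e).2 = v) → e ∈ F := by
        intro e he
        have : e ∈ (Γ.locfin v).toFinset := (Γ.locfin v).mem_toFinset.mpr he
        rw [← heq] at this
        exact (Finset.mem_filter.mp this).1
      have hplus : Γ.plusE v = ↑(F.filter fun e => (Γ.ends e).1 = v) := by
        ext e
        simp only [plusE, Set.mem_setOf_eq, Finset.coe_filter, Set.mem_setOf_eq]
        exact ⟨fun he => ⟨hstar e (Or.inl he), he⟩, fun he => he.2⟩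
      have hminus : Γ.minusE v = ↑(F.filter fun e => (Γ.ends e).2 = v) := by
        ext e
        simp only [minusE, Set.mem_setOf_eq, Finset.coe_filter, Set.mem_setOf_eq]
        exact ⟨fun he => ⟨hstar e (Or.inr he), he⟩, fun he => he.2⟩
      have hpcard : (Γ.plusE v).ncard = p v := by rw [hplus, Set.ncard_coe_finset]
      have hmcard : (Γ.minusE v).ncard = m v := by rw [hminus, Set.ncard_coe_finset]
      have hppos : 0 < p v := by
        have hne2 := h v
        rw [hplus] at hne2
        exact Finset.card_pos.mpr (Finset.coe_nonempty.mp hne2)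
      have hK : c ≤ 1 - (m v : ℝ) / (p v : ℝ) := by
        have := hKc v hv
        rwa [Kcomb, hpcard, hmcard] at this
      have hppos' : (0:ℝ) < p v := by exact_mod_cast hppos
      have := mul_le_mul_of_nonneg_right hK (le_of_lt hppos')
      have heq2 : (1 - (m v : ℝ) / (p v : ℝ)) * p v = (p v : ℝ) - m v := by
        field_simp
      linarith [heq2 ▸ this]
  have hsum := Finset.sum_le_sum hkey
  have h1 : ∑ v ∈ Γ.vertsOf F, c * (p v : ℝ) = c * F.card := by
    rw [← Finset.mul_sum, ← Nat.cast_sum, hsump]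
  have h2 : ∑ v ∈ Γ.vertsOf F, (((p v : ℝ) - m v) +
      (if Γ.degIn F v < Γ.degree v then (Γ.degIn F v : ℝ) else 0))
      = Γ.degBdry F := by
    rw [Finset.sum_add_distrib]
    have h3 : ∑ v ∈ Γ.vertsOf F, ((p v : ℝ) - m v) = 0 := by
      rw [Finset.sum_sub_distrib, ← Nat.cast_sum, ← Nat.cast_sum, hsump, hsumm, sub_self]
    have h4 : ∑ v ∈ Γ.vertsOf F,
        (if Γ.degIn F v < Γ.degree v then (Γ.degIn F v : ℝ) else 0) = Γ.degBdry F := by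
      rw [degBdry, bdry, Finset.sum_filter]
    rw [h3, h4, zero_add]
  rw [h1, h2] at hsum
  exact hsum

/-- A single edge is a valid finite connected subgraph. -/
lemma isFinSubgraph_singleton (e : Γ.E) : Γ.IsFinSubgraph {e} := by
  classical
  refine ⟨Finset.singleton_nonempty e, ?_⟩
  rw [SubConn]
  have hne : (Γ.ends e).1 ≠ (Γ.ends e).2 := Γ.no_loops e
  have hmem : ∀ x : Γ.V, x ∈ Γ.vertsOf {e} ↔ x = (Γ.ends e).1 ∨ x = (Γ.ends e).2 := by
    intro x
    simp [vertsOf, eq_comm]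
  have hu : (Γ.ends e).1 ∈ Γ.vertsOf {e} := (hmem _).mpr (Or.inl rfl)
  have hw : (Γ.ends e).2 ∈ Γ.vertsOf {e} := (hmem _).mpr (Or.inr rfl)
  have hadj : ((SimpleGraph.fromRel fun u v => ∃ e' ∈ ({e} : Finset Γ.E),
      Γ.ends e' = (u, v)).induce (↑(Γ.vertsOf {e}) : Set Γ.V)).Adj
      ⟨(Γ.ends e).1, hu⟩ ⟨(Γ.ends e).2, hw⟩ := by
    refine ⟨hne, Or.inl ⟨e, Finset.mem_singleton_self e, ?_⟩⟩
    exact Prod.ext rfl rfl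
  rw [SimpleGraph.connected_iff]
  constructor
  · intro a b
    have ha := (hmem a.1).mp a.2
    have hb := (hmem b.1).mp b.2
    rcases ha with ha | ha <;> rcases hb with hb | hb
    · exact Subtype.ext (ha.trans hb.symm) ▸ SimpleGraph.Reachable.refl _
    · have : a = ⟨(Γ.ends e).1, hu⟩ := Subtype.ext ha
      have hb' : b = ⟨(Γ.ends e).2, hw⟩ := Subtype.ext hb
      rw [this, hb']
      exact hadj.reachable
    · have : a = ⟨(Γ.ends e).2, hw⟩ := Subtype.ext ha
      have hb' : b = ⟨(Γ.ends e).1, hu⟩ := Subtype.ext hb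
      rw [this, hb']
      exact hadj.symm.reachable
    · exact Subtype.ext (ha.trans hb.symm) ▸ SimpleGraph.Reachable.refl _
  · exact ⟨⟨(Γ.ends e).1, hu⟩⟩

lemma degBdry_singleton_le (e : Γ.E) : Γ.degBdry {e} ≤ 2 := by
  classical
  have h1 : ∀ v : Γ.V, Γ.degIn {e} v ≤ 1 := fun v =>
    le_trans (Finset.card_filter_le _ _) (by simp)
  calc Γ.degBdry {e} ≤ ∑ _v ∈ Γ.bdry {e}, (1:ℝ) := by
        refine Finset.sum_le_sum fun v _ => ?_
        exact_mod_cast h1 v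
    _ = (Γ.bdry {e}).card := by rw [Finset.sum_const, nsmul_eq_mul, mul_one]
    _ ≤ ((Γ.vertsOf {e}).card : ℝ) := by
        exact_mod_cast Finset.card_le_card (Finset.filter_subset _ _)
    _ ≤ 2 := by
        rw [vertsOf]
        calc ((({e} : Finset Γ.E).image (fun e => (Γ.ends e).1) ∪
            ({e} : Finset Γ.E).image fun e => (Γ.ends e).2).card : ℝ)
            ≤ ((({e} : Finset Γ.E).image fun e => (Γ.ends e).1).card : ℝ) +
              ((({e} : Finset Γ.E).image fun e => (Γ.ends e).2).card : ℝ) := by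
              exact_mod_cast Finset.card_union_le _ _
          _ ≤ 2 := by
              simp only [Finset.image_singleton, Finset.card_singleton]
              norm_num

end MetricGraph

/-- **Lemma 6.5 (second part).** If `K(v) > 0` for every vertex `v` (in
particular `E_v⁺ ≠ ∅`, and hence `K_comb(v) > 0` for all `v`), then
`(liminf_v K_comb(v))/ℓ*_ess(G) ≤ α_ess(G) ≤ 2/ℓ*_ess(G)` in `[0,∞]`,
with the convention `1/0 = +∞`. -/
theorem alphaEss_comb_curvature_bounds (Γ : MetricGraph)
    (h : ∀ v : Γ.V, (Γ.plusE v).Nonempty ∧ 0 < Γ.Kcurv v) :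
    ENNReal.ofReal Γ.KcombLiminf / Γ.ellSupEssEnn ≤ Γ.alphaEssEnn ∧
    Γ.alphaEssEnn ≤ 2 / Γ.ellSupEssEnn := by
  classical
  haveI : Infinite Γ.V := Γ.infV
  haveI : Infinite Γ.E := Γ.infE
  -- the inner ratio of a singleton is at most 2/len e
  have hsingle : ∀ e : Γ.E,
      ENNReal.ofReal (Γ.degBdry {e} / Γ.mes {e}) ≤ ENNReal.ofReal (2 / Γ.len e) := by
    intro e
    refine ENNReal.ofReal_le_ofReal ?_
    have hmes : Γ.mes {e} = Γ.len e := Finset.sum_singleton _ _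
    rw [hmes]
    exact div_le_div₀ (by norm_num) (Γ.degBdry_singleton_le e) (Γ.len_pos e) le_rfl
  -- Claim A
  have claimA : ∀ (W : Finset Γ.V) (W' : Finset Γ.E),
      ENNReal.ofReal (sInf (Γ.Kcomb '' (↑W : Set Γ.V)ᶜ)) /
        (⨆ e : {e : Γ.E // e ∉ W'}, ENNReal.ofReal (Γ.len (e : Γ.E))) ≤ Γ.alphaEssEnn := by
    intro W W'
    set c := sInf (Γ.Kcomb '' (↑W : Set Γ.V)ᶜ) with hcdef
    set S := ⨆ e : {e : Γ.E // e ∉ W'}, ENNReal.ofReal (Γ.len (e : Γ.E)) with hSdef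
    by_cases hcpos : 0 < c
    swap
    · rw [ENNReal.ofReal_eq_zero.mpr (not_lt.mp hcpos), ENNReal.zero_div]
      exact zero_le
    have hbdd : BddBelow (Γ.Kcomb '' (↑W : Set Γ.V)ᶜ) := by
      by_contra hb
      rw [hcdef, Real.sInf_of_not_bddBelow hb] at hcpos
      exact lt_irrefl _ hcpos
    have hc1 : c ≤ 1 := by
      obtain ⟨v0, hv0⟩ := W.exists_notMem
      have hmem : Γ.Kcomb v0 ∈ Γ.Kcomb '' (↑W : Set Γ.V)ᶜ :=
        ⟨v0, by simpa using hv0, rfl⟩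
      exact le_trans (csInf_le hbdd hmem) (Γ.Kcomb_le_one v0)
    -- choice of the excluded finite edge set
    set F0 : Finset Γ.E := W' ∪ W.biUnion (fun v => (Γ.locfin v).toFinset) with hF0
    refine le_trans ?_ (le_iSup (fun W0 : Finset Γ.E =>
      ⨅ (F : Finset Γ.E) (_ : Γ.IsFinSubgraph F ∧ Disjoint F W0),
        ENNReal.ofReal (Γ.degBdry F / Γ.mes F)) F0)
    refine le_iInf fun Y => le_iInf fun hY => ?_
    -- vertices of Y avoid W
    have hvW : ∀ v ∈ Γ.vertsOf Y, v ∉ W := by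
      intro v hv hvmem
      rw [MetricGraph.vertsOf, Finset.mem_union] at hv
      have : ∃ e ∈ Y, (Γ.ends e).1 = v ∨ (Γ.ends e).2 = v := by
        rcases hv with h1 | h1 <;> rw [Finset.mem_image] at h1 <;>
          obtain ⟨e, heY, he⟩ := h1
        · exact ⟨e, heY, Or.inl he⟩
        · exact ⟨e, heY, Or.inr he⟩
      obtain ⟨e, heY, he⟩ := this
      have heF0 : e ∈ F0 := Finset.mem_union_right _
        (Finset.mem_biUnion.mpr ⟨v, hvmem, (Γ.locfin v).mem_toFinset.mpr he⟩)
      exact Finset.disjoint_left.mp hY.2 heY heF0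
    have hKc : ∀ v ∈ Γ.vertsOf Y, c ≤ Γ.Kcomb v := fun v hv =>
      csInf_le hbdd ⟨v, by simpa using hvW v hv, rfl⟩
    have hkeyY : c * Y.card ≤ Γ.degBdry Y :=
      Γ.key_estimate (fun v => (h v).1) c (hc1.trans one_le_two) Y hKc
    by_cases hStop : S = ⊤
    · rw [hStop, ENNReal.div_top]
      exact zero_le
    obtain ⟨e1, he1Y⟩ := hY.1.1
    have hnotW' : ∀ e ∈ Y, e ∉ W' := fun e he hW' =>
      Finset.disjoint_left.mp hY.2 he (Finset.mem_union_left _ hW')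
    have hlen_le : ∀ e ∈ Y, Γ.len e ≤ S.toReal := by
      intro e he
      have hle : ENNReal.ofReal (Γ.len e) ≤ S :=
        le_iSup (fun e : {e : Γ.E // e ∉ W'} => ENNReal.ofReal (Γ.len (e : Γ.E)))
          ⟨e, hnotW' e he⟩
      calc Γ.len e = (ENNReal.ofReal (Γ.len e)).toReal :=
            (ENNReal.toReal_ofReal (le_of_lt (Γ.len_pos e))).symm
        _ ≤ S.toReal := ENNReal.toReal_mono hStop hle
    have hSpos : 0 < S.toReal := lt_of_lt_of_le (Γ.len_pos e1) (hlen_le e1 he1Y)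
    have hmes_pos : 0 < Γ.mes Y := Finset.sum_pos (fun e _ => Γ.len_pos e) hY.1.1
    have hmes_le : Γ.mes Y ≤ S.toReal * Y.card := by
      rw [MetricGraph.mes]
      calc ∑ e ∈ Y, Γ.len e ≤ ∑ _e ∈ Y, S.toReal := Finset.sum_le_sum hlen_le
        _ = S.toReal * Y.card := by rw [Finset.sum_const, nsmul_eq_mul, mul_comm]
    have hratio : c / S.toReal ≤ Γ.degBdry Y / Γ.mes Y := by
      have hYcard : (0:ℝ) < Y.card := by exact_mod_cast Finset.card_pos.mpr hY.1.1
      rw [show c / S.toReal = (c * Y.card) / (S.toReal * Y.card) by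
        rw [mul_div_mul_right _ _ (ne_of_gt hYcard)]]
      exact div_le_div₀ (Γ.degBdry_nonneg Y) hkeyY hmes_pos hmes_le
    calc ENNReal.ofReal c / S
        = ENNReal.ofReal c / ENNReal.ofReal S.toReal := by rw [ENNReal.ofReal_toReal hStop]
      _ = ENNReal.ofReal (c / S.toReal) := (ENNReal.ofReal_div_of_pos hSpos).symm
      _ ≤ ENNReal.ofReal (Γ.degBdry Y / Γ.mes Y) := ENNReal.ofReal_le_ofReal hratio
  constructor
  · -- lower bound
    rw [MetricGraph.ellSupEssEnn, div_eq_mul_inv, ENNReal.inv_iInf, ENNReal.mul_iSup]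
    refine iSup_le fun W' => ?_
    rw [← div_eq_mul_inv]
    set S := ⨆ e : {e : Γ.E // e ∉ W'}, ENNReal.ofReal (Γ.len (e : Γ.E)) with hSdef
    by_cases hStop : S = ⊤
    · rw [hStop, ENNReal.div_top]
      exact zero_le
    obtain ⟨e0, he0⟩ := W'.exists_notMem
    have hS0 : S ≠ 0 := by
      have h1 : (0:ℝ≥0∞) < ENNReal.ofReal (Γ.len e0) := ENNReal.ofReal_pos.mpr (Γ.len_pos e0)
      have h2 : ENNReal.ofReal (Γ.len e0) ≤ S :=
        le_iSup (fun e : {e : Γ.E // e ∉ W'} => ENNReal.ofReal (Γ.len (e : Γ.E))) ⟨e0, he0⟩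
      exact ne_of_gt (lt_of_lt_of_le h1 h2)
    by_cases hA : Γ.alphaEssEnn = ⊤
    · rw [hA]; exact le_top
    have hAS : Γ.alphaEssEnn * S ≠ ⊤ := ENNReal.mul_ne_top hA hStop
    have hk : Γ.KcombLiminf ≤ (Γ.alphaEssEnn * S).toReal := by
      rw [MetricGraph.KcombLiminf]
      refine Real.sSup_le ?_ ENNReal.toReal_nonneg
      rintro x ⟨W, rfl⟩
      have h2 : ENNReal.ofReal (sInf (Γ.Kcomb '' (↑W : Set Γ.V)ᶜ)) ≤ Γ.alphaEssEnn * S :=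
        (ENNReal.div_le_iff_le_mul (Or.inl hS0) (Or.inl hStop)).mp (claimA W W')
      by_cases hx : 0 ≤ sInf (Γ.Kcomb '' (↑W : Set Γ.V)ᶜ)
      · calc sInf (Γ.Kcomb '' (↑W : Set Γ.V)ᶜ)
            = (ENNReal.ofReal (sInf (Γ.Kcomb '' (↑W : Set Γ.V)ᶜ))).toReal :=
              (ENNReal.toReal_ofReal hx).symm
          _ ≤ (Γ.alphaEssEnn * S).toReal := ENNReal.toReal_mono hAS h2
      · exact le_trans (le_of_not_ge hx) ENNReal.toReal_nonneg
    calc ENNReal.ofReal Γ.KcombLiminf / S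
        ≤ ENNReal.ofReal (Γ.alphaEssEnn * S).toReal / S :=
          ENNReal.div_le_div_right (ENNReal.ofReal_le_ofReal hk) S
      _ = (Γ.alphaEssEnn * S) / S := by rw [ENNReal.ofReal_toReal hAS]
      _ ≤ Γ.alphaEssEnn := ENNReal.div_le_of_le_mul (le_refl _)
  · -- upper bound
    rw [MetricGraph.alphaEssEnn]
    refine iSup_le fun W => ?_
    have hL : Γ.ellSupEssEnn ≤ ⨆ e : {e : Γ.E // e ∉ W}, ENNReal.ofReal (Γ.len (e : Γ.E)) :=
      iInf_le _ W
    refine le_trans ?_ (ENNReal.div_le_div_left hL 2)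
    set S := ⨆ e : {e : Γ.E // e ∉ W}, ENNReal.ofReal (Γ.len (e : Γ.E)) with hSdef
    obtain ⟨e0, he0⟩ := W.exists_notMem
    have hS0 : S ≠ 0 := by
      have h1 : (0:ℝ≥0∞) < ENNReal.ofReal (Γ.len e0) := ENNReal.ofReal_pos.mpr (Γ.len_pos e0)
      have h2 : ENNReal.ofReal (Γ.len e0) ≤ S :=
        le_iSup (fun e : {e : Γ.E // e ∉ W} => ENNReal.ofReal (Γ.len (e : Γ.E))) ⟨e0, he0⟩
      exact ne_of_gt (lt_of_lt_of_le h1 h2)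
    rw [ENNReal.le_div_iff_mul_le (Or.inl hS0) (Or.inr (by norm_num))]
    rw [hSdef, ENNReal.mul_iSup]
    refine iSup_le fun e => ?_
    have hinner : (⨅ (F : Finset Γ.E) (_ : Γ.IsFinSubgraph F ∧ Disjoint F W),
        ENNReal.ofReal (Γ.degBdry F / Γ.mes F)) ≤ ENNReal.ofReal (2 / Γ.len (e : Γ.E)) := by
      refine le_trans (iInf₂_le (({(e : Γ.E)} : Finset Γ.E)) ?_) (hsingle (e : Γ.E))
      exact ⟨Γ.isFinSubgraph_singleton (e : Γ.E),
        Finset.disjoint_singleton_left.mpr e.2⟩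
    calc (⨅ (F : Finset Γ.E) (_ : Γ.IsFinSubgraph F ∧ Disjoint F W),
          ENNReal.ofReal (Γ.degBdry F / Γ.mes F)) * ENNReal.ofReal (Γ.len (e : Γ.E))
        ≤ ENNReal.ofReal (2 / Γ.len (e : Γ.E)) * ENNReal.ofReal (Γ.len (e : Γ.E)) :=
          mul_le_mul' hinner (le_refl _)
      _ = ENNReal.ofReal ((2 / Γ.len (e : Γ.E)) * Γ.len (e : Γ.E)) :=
          (ENNReal.ofReal_mul (div_nonneg (by norm_num) (le_of_lt (Γ.len_pos _)))).symm
      _ = 2 := by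
          rw [div_mul_cancel₀ _ (ne_of_gt (Γ.len_pos (e : Γ.E)))]
          exact ENNReal.ofReal_ofNat 2
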